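/- Let A be an integral domain, f₁,…,fₙ pairwise non-associated prime elements of A, r₁,…,rₙ ≥ 1, and f = f₁^{r₁}⋯fₙ^{rₙ} ≠ 0. Then the A-submodule M̲O(A,f) of the localization A[f⁻¹] equals the cyclic A-submodule generated by the single element (f₁⋯fₙ)·f⁻¹, and M̲O(A,f) is a free A-module of rank one with basis {(f₁⋯fₙ)·f⁻¹}. Equivalently, M̲O(A,f) = (f₁^{r₁−1}⋯fₙ^{rₙ−1})⁻¹·A inside A[f⁻¹]. -/
import Mathlib


noncomputable section

/-- `M̲O(A,f)`: the `A`-submodule of `A[f⁻¹]` consisting of the elements `a·f⁻¹` with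
`a ∈ √((f))`. -/
def MOmod {A : Type*} [CommRing A] (f : A) : Submodule A (Localization.Away f) :=
  Submodule.span A {x | ∃ a ∈ (Ideal.span {f}).radical,
    x * algebraMap A (Localization.Away f) f = algebraMap A (Localization.Away f) a}

/-- For `f = f₁^{r₁} ⋯ fₙ^{rₙ}` a nonzero product of powers of pairwise non-associated
primes of a domain `A`, the module `M̲O(A,f)` is the cyclic `A`-submodule of `A[f⁻¹]`
generated by the element `g = (f₁⋯fₙ)·f⁻¹`, and it is free of rank one with basis `{g}`
(i.e. `g` has trivial annihilator). -/
theorem MOmod_eq_span_singleton_and_free {A : Type*} [CommRing A] [IsDomain A]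
    (n : ℕ) (f₀ : Fin n → A) (hprime : ∀ i, Prime (f₀ i))
    (hassoc : ∀ i j, i ≠ j → ¬ Associated (f₀ i) (f₀ j))
    (r : Fin n → ℕ) (hr : ∀ i, 1 ≤ r i)
    (f : A) (hf : f = ∏ i, f₀ i ^ r i) (hf0 : f ≠ 0)
    (g : Localization.Away f)
    (hg : g * algebraMap A (Localization.Away f) f
        = algebraMap A (Localization.Away f) (∏ i, f₀ i)) :
    MOmod f = Submodule.span A {g} ∧ ∀ a : A, a • g = 0 → a = 0 := by
  set φ := algebraMap A (Localization.Away f) with hφ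
  have hu : IsUnit (φ f) :=
    IsLocalization.map_units (M := Submonoid.powers f) _ ⟨f, Submonoid.mem_powers f⟩
  have hinj : Function.Injective φ :=
    IsLocalization.injective _ (powers_le_nonZeroDivisors_of_noZeroDivisors hf0)
  have hprod0 : (∏ i, f₀ i) ≠ 0 :=
    Finset.prod_ne_zero_iff.mpr fun i _ => (hprime i).ne_zero
  -- a product of pairwise non-associated primes each dividing `a` divides `a`
  have hdvd : ∀ (s : Finset (Fin n)) (a : A),
      (∀ i ∈ s, f₀ i ∣ a) → (∏ i ∈ s, f₀ i) ∣ a := by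
    intro s
    induction s using Finset.induction_on with
    | empty => intro a _; simp
    | @insert j s hj ih =>
      intro a ha
      obtain ⟨b, hb⟩ := ih a fun i hi => ha i (Finset.mem_insert_of_mem hi)
      have hja : f₀ j ∣ a := ha j (Finset.mem_insert_self j s)
      have hjb : f₀ j ∣ b := by
        rcases (hprime j).dvd_mul.mp (hb ▸ hja) with h | h
        · exfalso
          obtain ⟨i, hi, hdi⟩ := (Prime.dvd_finset_prod_iff (hprime j) _).mp h
          exact hassoc j i (fun e => hj (e ▸ hi))
            ((hprime j).irreducible.associated_of_dvd (hprime i).irreducible hdi)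
        · exact h
      obtain ⟨c, hc⟩ := hjb
      exact ⟨c, by rw [Finset.prod_insert hj, hb, hc]; ring⟩
  -- the radical of `(f)` is `(f₁⋯fₙ)`
  have hrad : (Ideal.span {f}).radical = Ideal.span {∏ i, f₀ i} := by
    apply le_antisymm
    · intro a ha
      obtain ⟨k, hk⟩ := Ideal.mem_radical_iff.mp ha
      rw [Ideal.mem_span_singleton] at hk ⊢
      refine hdvd Finset.univ a fun i _ => ?_
      have h1 : f₀ i ∣ f := by
        rw [hf]
        exact dvd_trans (dvd_pow_self (f₀ i) (Nat.one_le_iff_ne_zero.mp (hr i)))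
          (Finset.dvd_prod_of_mem _ (Finset.mem_univ i))
      exact (hprime i).dvd_of_dvd_pow (h1.trans hk)
    · rw [Ideal.span_le]
      intro x hx
      rw [Set.mem_singleton_iff] at hx
      subst hx
      refine Ideal.mem_radical_iff.mpr ⟨Finset.univ.sup r, ?_⟩
      rw [Ideal.mem_span_singleton, hf, ← Finset.prod_pow]
      exact Finset.prod_dvd_prod_of_dvd _ _ fun i _ =>
        pow_dvd_pow _ (Finset.le_sup (Finset.mem_univ i))
  constructor
  · apply le_antisymm
    · rw [MOmod, Submodule.span_le]
      rintro x ⟨a, ha, hxa⟩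
      rw [hrad, Ideal.mem_span_singleton] at ha
      obtain ⟨c, hc⟩ := ha
      have hx : x = c • g := by
        refine hu.mul_left_cancel ?_
        rw [mul_comm (φ f) x, mul_comm (φ f) (c • g), hxa, hc, map_mul,
          Algebra.smul_def, mul_assoc, hg, mul_comm]
      exact Submodule.mem_span_singleton.mpr ⟨c, hx.symm⟩
    · rw [Submodule.span_le]
      rintro x hx
      rw [Set.mem_singleton_iff] at hx
      subst hx
      exact Submodule.subset_span
        ⟨∏ i, f₀ i, by rw [hrad]; exact Ideal.subset_span rfl, hg⟩
  · intro a ha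
    have h0 : a * ∏ i, f₀ i = 0 := by
      apply hinj
      rw [map_mul, ← hg, ← mul_assoc, ← Algebra.smul_def, ha, zero_mul, map_zero]
    rcases mul_eq_zero.mp h0 with h | h
    · exact h
    · exact absurd h hprod0

end
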